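/- Any first-order theory T in a recursive language with an infinite model has a recursively saturated elementary extension of the same cardinality: every model M has an elementary extension N that is recursively saturated with |N| = |M|. -/

import Mathlib

open FirstOrder

namespace Paper

universe u v w



/-- A Gödel numbering of bounded formulas of a recursive (encodable) language. -/
noncomputable instance boundedFormulaEncodable (L : FirstOrder.Language.{u, v})
    [∀ n, Encodable (L.Functions n)] [∀ n, Encodable (L.Relations n)]
    (α : Type) [Encodable α] (n : ℕ) : Encodable (L.BoundedFormula α n) :=
  haveI : Countable (Σ k, L.BoundedFormula α k) :=
    Function.Injective.countable
      (f := fun φ : Σ k, L.BoundedFormula α k => φ.2.listEncode)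
      Language.BoundedFormula.listEncode_sigma_injective
  haveI : Countable (L.BoundedFormula α n) :=
    Function.Injective.countable
      (f := fun φ : L.BoundedFormula α n => (⟨n, φ⟩ : Σ k, L.BoundedFormula α k))
      sigma_mk_injective
  Encodable.ofCountable _

variable (L : FirstOrder.Language.{u, v})

section Saturation

variable [∀ n, Encodable (L.Functions n)] [∀ n, Encodable (L.Relations n)]

/-- The set of Gödel numbers of a set of formulas. -/
noncomputable def godelSet {α : Type} [Encodable α] (p : Set (L.Formula α)) : Set ℕ :=
  Encodable.encode '' p

/-- A set of formulas (in a recursive language) is recursive if its set of Gödel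
numbers is a computable predicate. -/
def RecSet {α : Type} [Encodable α] (p : Set (L.Formula α)) : Prop :=
  ComputablePred (· ∈ godelSet L p)

end Saturation

variable (M : Type w) [L.Structure M]

/-- `p(x̄, ā)` is a type over `M` with parameters `ā`: it is finitely satisfiable in `M`
(equivalently, consistent with `Th(M, ā)`). -/
def IsTypeOver {m k : ℕ} (a : Fin k → M) (p : Set (L.Formula (Fin m ⊕ Fin k))) : Prop :=
  ∀ S : Finset (L.Formula (Fin m ⊕ Fin k)), ↑S ⊆ p →
    ∃ x : Fin m → M, ∀ φ ∈ S, φ.Realize (Sum.elim x a)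

/-- The type `p(x̄, ā)` is realized in `M`. -/
def RealizesType {m k : ℕ} (a : Fin k → M) (p : Set (L.Formula (Fin m ⊕ Fin k))) : Prop :=
  ∃ x : Fin m → M, ∀ φ ∈ p, φ.Realize (Sum.elim x a)

/-- `M` is recursively saturated: every recursive type over `M` with finitely many
parameters is realized in `M`. -/
def RecursivelySaturated [∀ n, Encodable (L.Functions n)] [∀ n, Encodable (L.Relations n)] :
    Prop :=
  ∀ (m k : ℕ) (a : Fin k → M) (p : Set (L.Formula (Fin m ⊕ Fin k))),
    RecSet L p → IsTypeOver L M a p → RealizesType L M a p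

/-- The tuples `ā` and `b̄` have the same complete type in `M`. -/
def SameType {k : ℕ} (a b : Fin k → M) : Prop :=
  ∀ φ : L.Formula (Fin k), φ.Realize a ↔ φ.Realize b

/-- `M` is `ω`-homogeneous. -/
def OmegaHomogeneous : Prop :=
  ∀ (k : ℕ) (a b : Fin k → M), SameType L M a b →
    ∀ c : M, ∃ d : M, SameType L M (Fin.snoc a c) (Fin.snoc b d)

/-- `M` is strongly homogeneous: every type-preserving finite tuple correspondence
extends to an automorphism. -/
def StronglyHomogeneous : Prop :=
  ∀ (k : ℕ) (a b : Fin k → M), SameType L M a b →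
    ∃ g : M ≃[L] M, ∀ i, g (a i) = b i

/-- `p(x̄, ā)` is a complete type over `M`. -/
def CompleteTypeOver {m k : ℕ} (a : Fin k → M) (p : Set (L.Formula (Fin m ⊕ Fin k))) : Prop :=
  IsTypeOver L M a p ∧
    ∀ φ : L.Formula (Fin m ⊕ Fin k), φ ∈ p ∨ Language.Formula.not φ ∈ p

/-- `M` is `X`-saturated for a collection `X` of subsets of `ω`: a complete type over
`M` is realized in `M` exactly when the set of Gödel numbers of its parameter-free
version belongs to `X`. -/
def XSaturated [∀ n, Encodable (L.Functions n)] [∀ n, Encodable (L.Relations n)]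
    (X : Set (Set ℕ)) : Prop :=
  ∀ (m k : ℕ) (a : Fin k → M) (p : Set (L.Formula (Fin m ⊕ Fin k))),
    CompleteTypeOver L M a p → (RealizesType L M a p ↔ godelSet L p ∈ X)



/-! ### Auxiliary constructions for the proof -/

section AuxProof

open Cardinal

variable {L} {M}

variable [L.Structure M]

/-- The ultrapower of `M` along the hyperfilter on `ℕ`. -/
noncomputable abbrev NP (L : FirstOrder.Language.{u, v}) (M : Type w) [L.Structure M] :
    Type w :=
  ((Filter.hyperfilter ℕ : Ultrafilter ℕ) : Filter ℕ).Product (fun _ : ℕ => M)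

lemma los [Nonempty M] {β : Type} (φ : L.Formula β) (X : β → (ℕ → M)) :
    (φ.Realize fun b => (X b : NP L M)) ↔
      ∀ᶠ i in (Filter.hyperfilter ℕ : Ultrafilter ℕ), φ.Realize fun b => X b i :=
  Language.Ultraproduct.realize_formula_cast φ X

/-- The diagonal elementary embedding into the ultrapower. -/
noncomputable def diag (L : FirstOrder.Language.{u, v}) (M : Type w) [L.Structure M]
    [Nonempty M] : @FirstOrder.Language.ElementaryEmbedding L M (NP L M) _ _ where
  toFun x := ((fun _ : ℕ => x : ℕ → M) : NP L M)
  map_formula' := by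
    intro n φ x
    refine (los φ (fun b _ => x b)).trans ?_
    simp

variable [∀ n, Encodable (L.Functions n)] [∀ n, Encodable (L.Relations n)]

/-- The ultrapower realizes every finitely satisfiable type with finitely many
parameters (it is `ω`-saturated, because all such types are countable). -/
lemma NP_saturated [Nonempty M] (m k : ℕ) (a : Fin k → NP L M)
    (p : Set (L.Formula (Fin m ⊕ Fin k))) (hp : IsTypeOver L (NP L M) a p) :
    RealizesType L (NP L M) a p := by
  classical
  have ha : ∀ v : Fin k, ∃ g : ℕ → M, (g : NP L M) = a v := fun v => Quotient.exists_rep (a v)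
  choose ga hga using ha
  have hFfin : ∀ n : ℕ, {φ | φ ∈ p ∧ Encodable.encode φ < n}.Finite := by
    intro n
    apply Set.Finite.subset (Set.Finite.preimage
      (Set.injOn_of_injective Encodable.encode_injective) (Set.finite_Iio n))
    intro φ hφ
    exact hφ.2
  set F : ℕ → Set (L.Formula (Fin m ⊕ Fin k)) :=
    fun n => {φ | φ ∈ p ∧ Encodable.encode φ < n} with hFdef
  set C : ℕ → Set ℕ := fun n =>
    {i | n ≤ i ∧ ∃ y : Fin m → M, ∀ φ ∈ F n, φ.Realize (Sum.elim y fun v => ga v i)} with hCdef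
  have hC : ∀ n, ∀ᶠ i in (Filter.hyperfilter ℕ : Ultrafilter ℕ), i ∈ C n := by
    intro n
    have htail : ∀ᶠ i in (Filter.hyperfilter ℕ : Ultrafilter ℕ), n ≤ i :=
      (Filter.eventually_ge_atTop n).filter_mono Nat.hyperfilter_le_atTop
    obtain ⟨x, hx⟩ := hp (hFfin n).toFinset
      (by rw [Set.Finite.coe_toFinset]; exact fun φ h => h.1)
    have hxr : ∀ v : Fin m, ∃ g : ℕ → M, (g : NP L M) = x v := fun v => Quotient.exists_rep (x v)
    choose xh hxh using hxr
    have key : ∀ φ ∈ (hFfin n).toFinset, ∀ᶠ i in (Filter.hyperfilter ℕ : Ultrafilter ℕ),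
        φ.Realize fun b => Sum.elim xh ga b i := by
      intro φ hφ
      have h1 : φ.Realize (Sum.elim x a) := hx φ hφ
      have h2 : (Sum.elim x a) = fun b => ((Sum.elim xh ga b : ℕ → M) : NP L M) := by
        funext b; cases b <;> simp [hxh, hga]
      rw [h2] at h1; replace h1 := (los φ _).1 h1
      exact h1
    rw [← Filter.eventually_all_finset] at key
    filter_upwards [key, htail] with i hi hni
    refine ⟨hni, fun v => xh v i, fun φ hφ => ?_⟩
    have := hi φ ((hFfin n).mem_toFinset.2 hφ)
    convert this using 1
    funext b; cases b <;> rfl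
  set D : ℕ → ℕ := fun i => Nat.findGreatest (fun n => i ∈ C n) i with hDdef
  have hw : ∀ i : ℕ, ∃ y : Fin m → M, ∀ φ ∈ F (D i), φ.Realize (Sum.elim y fun v => ga v i) := by
    intro i
    rcases eq_or_ne (D i) 0 with h0 | h0
    · rw [h0]
      exact ⟨fun _ => Classical.arbitrary M, fun φ hφ => absurd hφ.2 (Nat.not_lt_zero _)⟩
    · exact (Nat.findGreatest_of_ne_zero (hDdef ▸ rfl : D i = D i) h0).2
  refine ⟨fun v => (((fun i => (hw i).choose v) : ℕ → M) : NP L M), fun φ hφ => ?_⟩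
  have hgood : ∀ᶠ i in (Filter.hyperfilter ℕ : Ultrafilter ℕ),
      φ.Realize fun b => Sum.elim (fun v i => (hw i).choose v) ga b i := by
    filter_upwards [hC (Encodable.encode φ + 1)] with i hi
    have h2 : Encodable.encode φ + 1 ≤ D i := Nat.le_findGreatest hi.1 hi
    have h3 : φ ∈ F (D i) := ⟨hφ, lt_of_lt_of_le (Nat.lt_succ_self _) h2⟩
    have := (hw i).choose_spec φ h3
    convert this using 1
    funext b; cases b <;> rfl
  have h2 : (Sum.elim (fun v => (((fun i => (hw i).choose v) : ℕ → M) : NP L M)) a)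
      = fun b => ((Sum.elim (fun v i => (hw i).choose v) ga b : ℕ → M) : NP L M) := by
    funext b; cases b <;> simp [hga] <;> rfl
  refine h2 ▸ (los φ _).2 ?_
  exact hgood

/-- There are only countably many recursive sets of formulas. -/
lemma countable_recSet (m k : ℕ) :
    Set.Countable {p : Set (L.Formula (Fin m ⊕ Fin k)) | RecSet L p} := by
  classical
  have key : ∀ p : {p : Set (L.Formula (Fin m ⊕ Fin k)) // RecSet L p},
      ∃ c : Nat.Partrec.Code, ∀ a : ℕ,
        (a ∈ godelSet L p.1 ↔ c.eval a = Part.some (Encodable.encode true)) := by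
    rintro ⟨p, hp⟩
    obtain ⟨f, hf, hfp⟩ := ComputablePred.computable_iff.1 hp
    have hg : Computable (fun n => Encodable.encode (f n)) := Computable.encode.comp hf
    obtain ⟨c, hc⟩ := Nat.Partrec.Code.exists_code.1 (Partrec.nat_iff.1 hg)
    refine ⟨c, fun a => ?_⟩
    have h1 : (a ∈ godelSet L p) = (f a = true) := congrFun hfp a
    rw [h1, hc]
    constructor
    · intro h
      show Part.some (Encodable.encode (f a)) = Part.some (Encodable.encode true)
      rw [h]
    · intro h
      have h2 : Part.some (Encodable.encode (f a)) = Part.some (Encodable.encode true) := h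
      have h3 : Encodable.encode (f a) = Encodable.encode true := by
        simpa using h2
      exact Encodable.encode_injective h3
  choose Θ hΘ using key
  have hinj : Function.Injective Θ := by
    intro p₁ p₂ h
    have hgs : godelSet L p₁.1 = godelSet L p₂.1 := by
      ext a
      rw [hΘ p₁ a, hΘ p₂ a, h]
    apply Subtype.ext
    ext φ
    constructor
    · intro hφ
      have : Encodable.encode φ ∈ godelSet L p₂.1 := hgs ▸ Set.mem_image_of_mem _ hφ
      obtain ⟨ψ, hψ, he⟩ := this
      rwa [← Encodable.encode_injective he]
    · intro hφ
      have : Encodable.encode φ ∈ godelSet L p₁.1 := hgs.symm ▸ Set.mem_image_of_mem _ hφ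
      obtain ⟨ψ, hψ, he⟩ := this
      rwa [← Encodable.encode_injective he]
  haveI : Countable {p : Set (L.Formula (Fin m ⊕ Fin k)) // RecSet L p} :=
    Function.Injective.countable hinj
  exact Set.countable_coe_iff.1 this

/-- One step of the construction: an elementary substructure of the ultrapower of
cardinality `#M` containing `A` together with witnesses for all recursive types with
parameters in `A`. -/
lemma exists_step [Infinite M] (A : Set (NP L M)) (hA : #A ≤ #M) :
    ∃ S : L.ElementarySubstructure (NP L M), A ⊆ (S : Set (NP L M)) ∧ #S = #M ∧
      ∀ (m k : ℕ) (a : Fin k → NP L M), (∀ i, a i ∈ A) →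
        ∀ p : Set (L.Formula (Fin m ⊕ Fin k)), RecSet L p → IsTypeOver L (NP L M) a p →
          ∃ x : Fin m → NP L M, (∀ i, x i ∈ (S : Set (NP L M))) ∧
            ∀ φ ∈ p, φ.Realize (Sum.elim x a) := by
  classical
  haveI : Nonempty M := inferInstance
  have haleph : ℵ₀ ≤ #M := Cardinal.infinite_iff.1 inferInstance
  -- an enumeration of the recursive sets of formulas
  have hcnt : ∀ m k : ℕ, ∃ f : {p : Set (L.Formula (Fin m ⊕ Fin k)) // RecSet L p} → ℕ,
      Function.Injective f := by
    intro m k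
    haveI : Countable {p : Set (L.Formula (Fin m ⊕ Fin k)) // RecSet L p} :=
      Set.countable_coe_iff.2 (countable_recSet m k)
    exact exists_injective_nat _
  choose encf hencf using fun m => hcnt m
  set dec : ∀ m k : ℕ, ℕ → Set (L.Formula (Fin m ⊕ Fin k)) := fun m k n =>
    if h : ∃ q : {p : Set (L.Formula (Fin m ⊕ Fin k)) // RecSet L p}, encf m k q = n
    then h.choose.1 else ∅ with hdecdef
  have hdec : ∀ (m k : ℕ) (p : Set (L.Formula (Fin m ⊕ Fin k))), RecSet L p →
      ∃ n : ℕ, dec m k n = p := by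
    intro m k p hrec
    refine ⟨encf m k ⟨p, hrec⟩, ?_⟩
    rw [hdecdef]
    have h : ∃ q : {p : Set (L.Formula (Fin m ⊕ Fin k)) // RecSet L p},
        encf m k q = encf m k ⟨p, hrec⟩ := ⟨⟨p, hrec⟩, rfl⟩
    simp only [h, dif_pos]
    have := hencf m k h.choose_spec
    rw [this]
  set I : Type w := Σ m k : ℕ, (Fin k → A) × ℕ with hIdef
  have hwit : ∀ i : I, ∃ x : Fin i.1 → NP L M,
      IsTypeOver L (NP L M) (fun j => (i.2.2.1 j : NP L M)) (dec i.1 i.2.1 i.2.2.2) →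
        ∀ φ ∈ dec i.1 i.2.1 i.2.2.2, φ.Realize (Sum.elim x fun j => (i.2.2.1 j : NP L M)) := by
    intro i
    by_cases h : IsTypeOver L (NP L M) (fun j => (i.2.2.1 j : NP L M)) (dec i.1 i.2.1 i.2.2.2)
    · obtain ⟨x, hx⟩ := NP_saturated _ _ _ _ h
      exact ⟨x, fun _ => hx⟩
    · exact ⟨fun _ => Classical.arbitrary _, fun hc => absurd hc h⟩
  choose wit hwitspec using hwit
  -- cardinality of the index type
  have hListA : #(List A) ≤ #M := by
    rcases isEmpty_or_nonempty A with hA0 | hA0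
    · exact le_trans Cardinal.mk_le_aleph0 haleph
    · rw [Cardinal.mk_list_eq_max_mk_aleph0]
      exact max_le hA haleph
  have hI : #I ≤ #M := by
    have hΘ : Function.Injective
        (fun i : I => (List.ofFn i.2.2.1, (i.1, i.2.2.2))) := by
      rintro ⟨m, k, a, q⟩ ⟨m', k', a', q'⟩ h
      simp only [Prod.mk.injEq] at h
      obtain ⟨hl, hm, he⟩ := h
      subst hm
      have hk : k = k' := by
        have := congrArg List.length hl
        simpa using this
      subst hk
      have ha' : a = a' := by
        have := List.ofFn_injective hl
        exact this
      subst ha'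
      subst he
      rfl
    calc #I ≤ #(List A × (ℕ × ℕ)) := Cardinal.mk_le_of_injective hΘ
      _ ≤ #M := by
        rw [Cardinal.mk_prod]
        have h1 : Cardinal.lift.{0} #(List A) ≤ #M := by
          rwa [Cardinal.lift_uzero]
        have h2 : Cardinal.lift.{w} #(ℕ × ℕ) ≤ #M := by
          simpa using haleph
        calc Cardinal.lift.{0} #(List A) * Cardinal.lift.{w} #(ℕ × ℕ)
            ≤ #M * #M := mul_le_mul' h1 h2
          _ = #M := Cardinal.mul_eq_self haleph
  -- the set to close off
  set W : Set (NP L M) := A ∪ ⋃ i : I, Set.range (wit i) with hWdef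
  have hW : #W ≤ #M := by
    refine le_trans (Cardinal.mk_union_le _ _) ?_
    have h2 : #(⋃ i : I, Set.range (wit i)) ≤ #M := by
      refine le_trans (Cardinal.mk_iUnion_le _) ?_
      have h3 : ⨆ i : I, #(Set.range (wit i)) ≤ ℵ₀ := by
        rcases isEmpty_or_nonempty I with h | h
        · simp [ciSup_of_empty]
        · refine ciSup_le' fun i => ?_
          haveI : Finite (Set.range (wit i)) := Set.finite_range _
          exact Cardinal.mk_le_aleph0
      calc #I * ⨆ i : I, #(Set.range (wit i)) ≤ #M * ℵ₀ := mul_le_mul' hI h3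
        _ ≤ #M * #M := mul_le_mul' le_rfl haleph
        _ = #M := Cardinal.mul_eq_self haleph
    calc #A + #(⋃ i : I, Set.range (wit i)) ≤ #M + #M := add_le_add hA h2
      _ = #M := Cardinal.add_eq_self haleph
  -- downward Löwenheim–Skolem
  have hLcard : L.card ≤ ℵ₀ := by
    haveI : Countable L.Symbols := by
      unfold Language.Symbols
      infer_instance
    exact Cardinal.mk_le_aleph0
  have hMNP : #M ≤ #(NP L M) :=
    Cardinal.mk_le_of_injective (diag L M).injective
  have hl3 : Cardinal.lift.{w} L.card ≤ Cardinal.lift.{max u v} (#M) :=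
    calc Cardinal.lift.{w} L.card ≤ Cardinal.lift.{w} ℵ₀ := Cardinal.lift_le.2 hLcard
      _ = ℵ₀ := Cardinal.lift_aleph0
      _ ≤ Cardinal.lift.{max u v} (#M) := Cardinal.aleph0_le_lift.2 haleph
  obtain ⟨S, hS1, hS2⟩ := Language.exists_elementarySubstructure_card_eq (L := L) (M := NP L M)
    W (#M) haleph
    (by rw [Cardinal.lift_id, Cardinal.lift_id]; exact hW)
    hl3
    (by rw [Cardinal.lift_id, Cardinal.lift_id]; exact hMNP)
  refine ⟨S, le_trans Set.subset_union_left hS1, ?_, ?_⟩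
  · rw [Cardinal.lift_id, Cardinal.lift_id] at hS2
    exact hS2
  · intro m k a ha p hrec htype
    obtain ⟨np, hnp⟩ := hdec m k p hrec
    set i : I := ⟨m, k, fun j => ⟨a j, ha j⟩, np⟩ with hidef
    have hae : (fun j => ((⟨a j, ha j⟩ : A) : NP L M)) = a := rfl
    have hdeci : dec i.1 i.2.1 i.2.2.2 = p := hnp
    refine ⟨wit i, fun j => hS1 (Set.mem_union_right _ ?_), ?_⟩
    · exact Set.mem_iUnion.2 ⟨i, Set.mem_range_self _⟩
    · intro φ hφ
      have := hwitspec i (by rw [hdeci]; simpa [hae] using htype) φ (by rw [hdeci]; exact hφ)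
      simpa [hae] using this

variable (L M) in
/-- The elementary chain of substructures of the ultrapower. -/
noncomputable def chainS [Infinite M] :
    ℕ → {S : L.ElementarySubstructure (NP L M) // #S = #M}
  | 0 => ⟨(exists_step (Set.range (diag L M)) Cardinal.mk_range_le).choose,
      (exists_step (Set.range (diag L M)) Cardinal.mk_range_le).choose_spec.2.1⟩
  | n + 1 =>
    ⟨(exists_step ((chainS n).1 : Set (NP L M)) (le_of_eq (chainS n).2)).choose,
      (exists_step ((chainS n).1 : Set (NP L M))
        (le_of_eq (chainS n).2)).choose_spec.2.1⟩

lemma chainS_zero_spec [Infinite M] :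
    Set.range (diag L M) ⊆ ((chainS L M 0).1 : Set (NP L M)) :=
  (exists_step (Set.range (diag L M)) Cardinal.mk_range_le).choose_spec.1

lemma chainS_succ_subset [Infinite M] (n : ℕ) :
    ((chainS L M n).1 : Set (NP L M)) ⊆ ((chainS L M (n + 1)).1 : Set (NP L M)) :=
  (exists_step ((chainS L M n).1 : Set (NP L M))
    (le_of_eq (chainS L M n).2)).choose_spec.1

lemma chainS_succ_wit [Infinite M] (n : ℕ) :
    ∀ (m k : ℕ) (a : Fin k → NP L M), (∀ i, a i ∈ ((chainS L M n).1 : Set (NP L M))) →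
      ∀ p : Set (L.Formula (Fin m ⊕ Fin k)), RecSet L p → IsTypeOver L (NP L M) a p →
        ∃ x : Fin m → NP L M, (∀ i, x i ∈ ((chainS L M (n + 1)).1 : Set (NP L M))) ∧
          ∀ φ ∈ p, φ.Realize (Sum.elim x a) :=
  (exists_step ((chainS L M n).1 : Set (NP L M))
    (le_of_eq (chainS L M n).2)).choose_spec.2.2

lemma chainS_mono [Infinite M] {n n' : ℕ} (h : n ≤ n') :
    ((chainS L M n).1 : Set (NP L M)) ⊆ ((chainS L M n').1 : Set (NP L M)) :=
  monotone_nat_of_le_succ (f := fun n => ((chainS L M n).1 : Set (NP L M)))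
    (fun n => chainS_succ_subset n) h

variable (L M) in
/-- The union of the elementary chain, as a substructure. -/
noncomputable def bigT [Infinite M] : L.Substructure (NP L M) where
  carrier := ⋃ n, ((chainS L M n).1 : Set (NP L M))
  fun_mem := by
    classical
    intro n f x hx
    choose j hj using fun i => Set.mem_iUnion.1 (hx i)
    have hx' : ∀ i, x i ∈ ((chainS L M ((Finset.univ : Finset (Fin n)).sup j)).1 :
        Set (NP L M)) :=
      fun i => chainS_mono (Finset.le_sup (Finset.mem_univ i)) (hj i)
    exact Set.mem_iUnion.2 ⟨(Finset.univ : Finset (Fin n)).sup j,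
      ((chainS L M ((Finset.univ : Finset (Fin n)).sup j)).1 :
        L.Substructure (NP L M)).fun_mem f x hx'⟩

variable (L M) in
/-- The union of the elementary chain is an elementary substructure
(Tarski–Vaught test). -/
noncomputable def bigTE [Infinite M] : L.ElementarySubstructure (NP L M) :=
  (bigT L M).toElementarySubstructure (by
    classical
    intro n φ x b hb
    choose j hj using fun i => Set.mem_iUnion.1 (x i).2
    set nm := (Finset.univ : Finset (Fin n)).sup j with hnm
    set S := (chainS L M nm).1 with hS
    have hmem : ∀ i, (x i : NP L M) ∈ S :=
      fun i => chainS_mono (Finset.le_sup (Finset.mem_univ i)) (hj i)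
    set x' : Fin n → S := fun i => ⟨x i, hmem i⟩ with hx'
    have h1 : φ.ex.Realize (default : Empty → NP L M) (((↑) : S → NP L M) ∘ x') :=
      Language.BoundedFormula.realize_ex.2 ⟨b, hb⟩
    have h2 : φ.ex.Realize (S.subtype ∘ (default : Empty → S)) (S.subtype ∘ x') := by
      rw [Subsingleton.elim (S.subtype ∘ (default : Empty → S))
        (default : Empty → NP L M)]
      exact h1
    rw [S.subtype.map_boundedFormula] at h2
    obtain ⟨b', hb'⟩ := Language.BoundedFormula.realize_ex.1 h2
    have h3 := (S.subtype.map_boundedFormula φ (default : Empty → S)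
      (Fin.snoc x' b')).2 hb'
    rw [Subsingleton.elim (S.subtype ∘ (default : Empty → S))
      (default : Empty → NP L M), Fin.comp_snoc] at h3
    exact ⟨⟨(b' : NP L M), Set.mem_iUnion.2 ⟨nm, b'.2⟩⟩, h3⟩)

variable (L M) in
/-- The elementary embedding of `M` into the union. -/
noncomputable def bigEmb [Infinite M] :
    @FirstOrder.Language.ElementaryEmbedding L M (bigTE L M) _ _ where
  toFun x := ⟨diag L M x, Set.mem_iUnion.2 ⟨0, chainS_zero_spec (Set.mem_range_self x)⟩⟩
  map_formula' := by
    intro n φ v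
    have h1 := (bigTE L M).subtype.map_formula φ
      (fun i => (⟨diag L M (v i), Set.mem_iUnion.2
        ⟨0, chainS_zero_spec (Set.mem_range_self (v i))⟩⟩ : bigTE L M))
    have h2 := (diag L M).map_formula φ v
    exact h1.symm.trans h2

end AuxProof

/-- Every infinite model (of any theory in a recursive language)
has a recursively saturated elementary extension of the same cardinality. -/
theorem exists_recursivelySaturated_elementaryExtension
    (L : FirstOrder.Language.{u, v}) [iF : ∀ n, Encodable (L.Functions n)]
    [iR : ∀ n, Encodable (L.Relations n)] (M : Type w) [iM : L.Structure M]
    [Infinite M] :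
    ∃ (N : Type w) (iN : L.Structure N),
      Nonempty (@FirstOrder.Language.ElementaryEmbedding L M N iM iN) ∧
      @RecursivelySaturated L N iN iF iR ∧ Cardinal.mk N = Cardinal.mk M := by
  classical
  refine ⟨bigTE L M, inferInstance, ⟨bigEmb L M⟩, ?_, ?_⟩
  · -- recursive saturation
    intro m k a p hrec htype
    choose j hj using fun i => Set.mem_iUnion.1 (a i).2
    set nm := (Finset.univ : Finset (Fin k)).sup j with hnm
    set a' : Fin k → NP L M := fun i => (a i : NP L M) with ha'
    have ha'mem : ∀ i, a' i ∈ ((chainS L M nm).1 : Set (NP L M)) :=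
      fun i => chainS_mono (Finset.le_sup (Finset.mem_univ i)) (hj i)
    have htype' : IsTypeOver L (NP L M) a' p := by
      intro Sf hSf
      obtain ⟨x, hx⟩ := htype Sf hSf
      refine ⟨fun i => (x i : NP L M), fun φ hφ => ?_⟩
      have h1 := ((bigTE L M).subtype.map_formula φ (Sum.elim x a)).2 (hx φ hφ)
      have he : ((bigTE L M).subtype ∘ Sum.elim x a)
          = Sum.elim (fun i => ((x i : NP L M))) a' := funext fun b => by cases b <;> rfl
      rwa [he] at h1
    obtain ⟨x', hx'mem, hx'⟩ := chainS_succ_wit nm m k a' ha'mem p hrec htype'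
    set x'' : Fin m → (bigTE L M) :=
      fun i => ⟨x' i, Set.mem_iUnion.2 ⟨nm + 1, hx'mem i⟩⟩ with hx''
    refine ⟨x'', fun φ hφ => ?_⟩
    have he : ((bigTE L M).subtype ∘ Sum.elim x'' a) = Sum.elim x' a' :=
      funext fun b => by cases b <;> rfl
    exact ((bigTE L M).subtype.map_formula φ (Sum.elim x'' a)).1
      (by rw [he]; exact hx' φ hφ)
  · -- cardinality
    have haleph : Cardinal.aleph0 ≤ (Cardinal.mk M) := Cardinal.infinite_iff.1 inferInstance
    have h0 : Cardinal.mk (⋃ n : ℕ, ((chainS L M n).1 : Set (NP L M))) ≤ (Cardinal.mk M) := by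
      have h1 := Cardinal.mk_iUnion_le_lift
        (f := fun n : ℕ => ((chainS L M n).1 : Set (NP L M)))
      have h2 : (fun n : ℕ =>
          Cardinal.lift.{0} (Cardinal.mk ((chainS L M n).1 : Set (NP L M))))
            = fun _ => (Cardinal.mk M) :=
        funext fun n => by rw [Cardinal.lift_uzero]; exact (chainS L M n).2
      rw [h2, ciSup_const, Cardinal.lift_uzero, Cardinal.mk_denumerable ℕ,
        Cardinal.lift_aleph0, Cardinal.mul_eq_max le_rfl haleph, max_eq_right haleph] at h1
      exact h1
    have hcard_le : Cardinal.mk (bigTE L M) ≤ (Cardinal.mk M) := h0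
    have hcard_ge : (Cardinal.mk M) ≤ Cardinal.mk (bigTE L M) :=
      Cardinal.mk_le_of_injective (bigEmb L M).injective
    exact le_antisymm hcard_le hcard_ge


end Paper
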